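/- Let A be a 2×2 real matrix with trace A = 0 and det A < 0, and let 0 < τ < 2/√(−det A). Then I − (τ/2)A is invertible, the matrix S(τ) = (I − (τ/2)A)⁻¹ (I + (τ/2)A) satisfies det S(τ) = 1 and trace S(τ) > 2, and the set {x ∈ ℝ² : {S(τ)ⁿ·x : n ∈ ℕ} is bounded} is a linear subspace of ℝ² of dimension 1, the same as the dimension of {x ∈ ℝ² : {exp(tA)·x : t ≥ 0} is bounded}. -/

import Mathlib

open Matrix Bornology
open scoped Nat

/-- The positive semi-orbit of `x` under the continuous dynamical system `y' = A y`,
i.e. the set `{exp (t A) x : t ≥ 0}`. -/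
noncomputable def contOrbit (A : Matrix (Fin 2) (Fin 2) ℝ) (x : EuclideanSpace ℝ (Fin 2)) :
    Set (EuclideanSpace ℝ (Fin 2)) :=
  {y | ∃ t : ℝ, 0 ≤ t ∧ y = (NormedSpace.exp (t • A)).mulVec x}

/-- The positive semi-orbit of `x` under the discrete dynamical system `y_{n+1} = S y_n`,
i.e. the set `{Sⁿ x : n ∈ ℕ}`. -/
def discOrbit (S : Matrix (Fin 2) (Fin 2) ℝ) (x : EuclideanSpace ℝ (Fin 2)) :
    Set (EuclideanSpace ℝ (Fin 2)) :=
  {y | ∃ n : ℕ, y = (S ^ n).mulVec x}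

lemma pow_mulVec_eig (M : Matrix (Fin 2) (Fin 2) ℝ) (μ : ℝ) (v : Fin 2 → ℝ)
    (h : M.mulVec v = μ • v) (n : ℕ) : (M ^ n).mulVec v = μ ^ n • v := by
  induction n with
  | zero => simp
  | succ n ih =>
    rw [pow_succ', ← Matrix.mulVec_mulVec, ih, Matrix.mulVec_smul, h, pow_succ', smul_smul,
      mul_comm μ (μ ^ n)]

lemma exp_mulVec_eig (M : Matrix (Fin 2) (Fin 2) ℝ) (μ : ℝ) (v : Fin 2 → ℝ)
    (h : M.mulVec v = μ • v) :
    (NormedSpace.exp M).mulVec v = Real.exp μ • v := by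
  letI : NormedRing (Matrix (Fin 2) (Fin 2) ℝ) := Matrix.linftyOpNormedRing
  letI : NormedAlgebra ℝ (Matrix (Fin 2) (Fin 2) ℝ) := Matrix.linftyOpNormedAlgebra
  have hsum : HasSum (fun n : ℕ => ((n ! : ℝ)⁻¹) • M ^ n) (NormedSpace.exp M) :=
    NormedSpace.exp_series_hasSum_exp' M
  let L : Matrix (Fin 2) (Fin 2) ℝ →ₗ[ℝ] (Fin 2 → ℝ) :=
    { toFun := fun N => N.mulVec v
      map_add' := fun N₁ N₂ => Matrix.add_mulVec N₁ N₂ v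
      map_smul' := fun c N => Matrix.smul_mulVec c N v }
  have hL : Continuous L := L.continuous_of_finiteDimensional
  have h2 : HasSum (fun n : ℕ => L (((n ! : ℝ)⁻¹) • M ^ n)) (L (NormedSpace.exp M)) :=
    hsum.map L hL
  have h3 : (fun n : ℕ => L (((n ! : ℝ)⁻¹) • M ^ n))
      = fun n : ℕ => (((n ! : ℝ)⁻¹) * μ ^ n) • v := by
    funext n
    show (((n ! : ℝ)⁻¹) • M ^ n) *ᵥ v = _
    rw [Matrix.smul_mulVec, pow_mulVec_eig M μ v h, smul_smul]
  rw [h3] at h2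
  have h4 : HasSum (fun n : ℕ => ((n ! : ℝ)⁻¹) * μ ^ n) (Real.exp μ) := by
    have := NormedSpace.exp_series_hasSum_exp' (𝕂 := ℝ) μ
    simpa [Real.exp_eq_exp_ℝ, smul_eq_mul] using this
  exact h2.unique (h4.smul_const v)

/-- existence of eigenvectors -/
lemma eigvec (A : Matrix (Fin 2) (Fin 2) ℝ) (hTr : A.trace = 0) (r : ℝ)
    (hr : r ^ 2 = -A.det) : ∃ v : Fin 2 → ℝ, v ≠ 0 ∧ A.mulVec v = r • v := by
  have h1 : A 0 0 + A 1 1 = 0 := by rw [← Matrix.trace_fin_two]; exact hTr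
  have hdet : (A - r • 1).det = 0 := by
    have h2 : A.det = A 0 0 * A 1 1 - A 0 1 * A 1 0 := Matrix.det_fin_two A
    simp only [Matrix.det_fin_two, Matrix.sub_apply, Matrix.smul_apply, Matrix.one_apply,
      smul_eq_mul]
    norm_num
    linear_combination (-r) * h1 - h2 + hr
  obtain ⟨v, hv0, hv⟩ := Matrix.exists_mulVec_eq_zero_iff.2 hdet
  refine ⟨v, hv0, ?_⟩
  have := hv
  rw [Matrix.sub_mulVec, Matrix.smul_mulVec, Matrix.one_mulVec, sub_eq_zero] at this
  exact this

lemma bounded_orbit_eq_span {ι : Type} (T : ι → Matrix (Fin 2) (Fin 2) ℝ)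
    (vp vm : EuclideanSpace ℝ (Fin 2))
    (hind : LinearIndependent ℝ ![vp, vm])
    (f g : ι → ℝ) (hp : ∀ i, (T i).mulVec vp = f i • vp) (hm : ∀ i, (T i).mulVec vm = g i • vm)
    (hg : ∀ i, |g i| ≤ 1) (hf : ∀ C : ℝ, ∃ i, C < f i) :
    {x : EuclideanSpace ℝ (Fin 2) |
        IsBounded {y : EuclideanSpace ℝ (Fin 2) | ∃ i, y = (T i).mulVec x}}
      = ↑(Submodule.span ℝ {vm}) := by
  have hcard : Fintype.card (Fin 2) = Module.finrank ℝ (EuclideanSpace ℝ (Fin 2)) := by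
    simp [finrank_euclideanSpace_fin]
  let b : Module.Basis (Fin 2) ℝ (EuclideanSpace ℝ (Fin 2)) :=
    basisOfLinearIndependentOfCardEqFinrank hind hcard
  have hb0 : b 0 = vp := by
    rw [show b 0 = ![vp, vm] 0 from congrFun (coe_basisOfLinearIndependentOfCardEqFinrank _ _) 0]
    rfl
  have hb1 : b 1 = vm := by
    rw [show b 1 = ![vp, vm] 1 from congrFun (coe_basisOfLinearIndependentOfCardEqFinrank _ _) 1]
    rfl
  ext x
  simp only [Set.mem_setOf_eq, SetLike.mem_coe, Submodule.mem_span_singleton]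
  constructor
  · intro hbd
    set a : ℝ := b.repr x 0 with ha_def
    set c : ℝ := b.repr x 1 with hc_def
    have hx : x = a • vp + c • vm := by
      have := b.sum_repr x
      rw [Fin.sum_univ_two, hb0, hb1] at this
      exact this.symm
    have hTi : ∀ i, (T i).mulVec x = (f i * a) • vp + (g i * c) • vm := by
      intro i
      calc (T i).mulVec x = (T i).mulVec (a • vp + c • vm) := by rw [hx]; rfl
        _ = a • ((T i).mulVec vp) + c • ((T i).mulVec vm) := by
            rw [Matrix.mulVec_add, Matrix.mulVec_smul, Matrix.mulVec_smul]
        _ = (f i * a) • vp + (g i * c) • vm := by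
            rw [hp i, hm i, smul_smul, smul_smul, mul_comm a (f i), mul_comm c (g i)]
    have ha : a = 0 := by
      by_contra ha
      let phi : EuclideanSpace ℝ (Fin 2) →L[ℝ] ℝ :=
        LinearMap.toContinuousLinearMap (b.coord 0)
      have hphip : phi vp = 1 := by
        show (b.coord 0) vp = 1
        rw [← hb0, Module.Basis.coord_apply, Module.Basis.repr_self]
        simp
      have hphim : phi vm = 0 := by
        show (b.coord 0) vm = 0
        rw [← hb1, Module.Basis.coord_apply, Module.Basis.repr_self]
        simp
      obtain ⟨C, hC⟩ := isBounded_iff_forall_norm_le.1 hbd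
      obtain ⟨i, hi⟩ := hf ((‖phi‖ * C) / |a|)
      have hmem : WithLp.toLp 2 ((T i).mulVec x) ∈ {y : EuclideanSpace ℝ (Fin 2) | ∃ i, y = (T i).mulVec x} :=
        ⟨i, rfl⟩
      have hnorm := hC _ hmem
      have hval : phi (WithLp.toLp 2 ((T i).mulVec x)) = f i * a := by
        rw [hTi i, WithLp.toLp_add, WithLp.toLp_smul, WithLp.toLp_smul, WithLp.toLp_ofLp,
          WithLp.toLp_ofLp]
        rw [map_add, _root_.map_smul, _root_.map_smul, hphip, hphim]
        simp
      have hle : |f i * a| ≤ ‖phi‖ * C := by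
        have h1 := phi.le_opNorm (WithLp.toLp 2 ((T i).mulVec x))
        rw [hval, Real.norm_eq_abs] at h1
        exact h1.trans (mul_le_mul_of_nonneg_left hnorm (norm_nonneg phi))
      have hgt : ‖phi‖ * C < f i * |a| := by
        rw [div_lt_iff₀ (abs_pos.2 ha)] at hi
        exact hi
      have : f i * |a| ≤ |f i * a| := by
        rw [abs_mul]
        exact mul_le_mul_of_nonneg_right (le_abs_self _) (abs_nonneg _)
      linarith
    exact ⟨c, by rw [hx, ha, zero_smul, zero_add]⟩
  · rintro ⟨c, rfl⟩
    rw [isBounded_iff_forall_norm_le]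
    refine ⟨|c| * ‖vm‖, ?_⟩
    rintro y ⟨i, hy⟩
    have h1 : (T i).mulVec (c • vm) = (g i * c) • vm := by
      rw [Matrix.mulVec_smul, hm i, smul_smul, mul_comm c (g i)]
    have hy' : y = (g i * c) • vm := WithLp.ofLp_injective 2 (hy.trans h1)
    rw [hy', norm_smul, Real.norm_eq_abs, abs_mul]
    have := hg i
    nlinarith [mul_nonneg (abs_nonneg c) (norm_nonneg vm), abs_nonneg (g i)]

theorem stmt_19 (A : Matrix (Fin 2) (Fin 2) ℝ) (hTr : A.trace = 0) (hDet : A.det < 0)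
    (τ : ℝ) (hτ0 : 0 < τ) (hτ : τ < 2 / Real.sqrt (-A.det)) :
    IsUnit (1 - (τ / 2) • A) ∧
    ((1 - (τ / 2) • A)⁻¹ * (1 + (τ / 2) • A)).det = 1 ∧
    (2 : ℝ) < ((1 - (τ / 2) • A)⁻¹ * (1 + (τ / 2) • A)).trace ∧
    ∃ BS BA : Submodule ℝ (EuclideanSpace ℝ (Fin 2)),
      (↑BS = {x : EuclideanSpace ℝ (Fin 2) |
        IsBounded (discOrbit ((1 - (τ / 2) • A)⁻¹ * (1 + (τ / 2) • A)) x)}) ∧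
      Module.finrank ℝ BS = 1 ∧
      (↑BA = {x : EuclideanSpace ℝ (Fin 2) | IsBounded (contOrbit A x)}) ∧
      Module.finrank ℝ BA = Module.finrank ℝ BS := by
  set μ : ℝ := Real.sqrt (-A.det) with hμ_def
  have hμpos : 0 < μ := Real.sqrt_pos.2 (by linarith)
  have hμsq : μ ^ 2 = -A.det := Real.sq_sqrt (by linarith)
  set c : ℝ := τ / 2 with hc_def
  have hcpos : 0 < c := by positivity
  have hcμ : c * μ < 1 := by
    have h1 : τ * μ < 2 := by
      rw [lt_div_iff₀ hμpos] at hτ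
      exact hτ
    rw [hc_def]
    linarith
  have hcμpos : 0 < c * μ := by positivity
  have h11 : A 1 1 = -A 0 0 := by
    have := Matrix.trace_fin_two A
    rw [hTr] at this
    linarith [this.symm]
  have hAdet : A.det = A 0 0 * A 1 1 - A 0 1 * A 1 0 := Matrix.det_fin_two A
  -- determinant computations
  have hdm : (1 - c • A).det = 1 + c ^ 2 * A.det := by
    simp only [Matrix.det_fin_two, Matrix.sub_apply, Matrix.smul_apply, Matrix.one_apply,
      smul_eq_mul]
    norm_num
    rw [h11]; ring
  have hdp : (1 + c • A).det = 1 + c ^ 2 * A.det := by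
    simp only [Matrix.det_fin_two, Matrix.add_apply, Matrix.smul_apply, Matrix.one_apply,
      smul_eq_mul]
    norm_num
    rw [h11]; ring
  have hdpos : 0 < 1 + c ^ 2 * A.det := by nlinarith [hμsq]
  have hdet0 : (1 - c • A).det ≠ 0 := by rw [hdm]; exact ne_of_gt hdpos
  have hUnit : IsUnit (1 - c • A) := by
    rw [Matrix.isUnit_iff_isUnit_det]
    exact isUnit_iff_ne_zero.2 hdet0
  refine ⟨hUnit, ?_, ?_, ?_⟩
  · rw [Matrix.det_mul, Matrix.det_nonsing_inv, hdm, hdp, Ring.inverse_eq_inv']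
    field_simp
  · -- trace
    have hadj : (1 - c • A).adjugate = 1 + c • A := by
      rw [Matrix.adjugate_fin_two]
      ext i j
      fin_cases i <;> fin_cases j <;>
        simp [Matrix.sub_apply, Matrix.add_apply, Matrix.smul_apply, Matrix.one_apply,
          h11] <;> ring
    have hSform : (1 - c • A)⁻¹ * (1 + c • A)
        = (1 + c ^ 2 * A.det)⁻¹ • ((1 + c • A) * (1 + c • A)) := by
      rw [Matrix.inv_def, hadj, hdm, Ring.inverse_eq_inv', Matrix.smul_mul]
    rw [hSform, Matrix.trace_smul, smul_eq_mul]
    have htr : ((1 + c • A) * (1 + c • A)).trace = 2 - 2 * (c ^ 2 * A.det) := by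
      simp only [Matrix.trace_fin_two, Matrix.mul_apply, Fin.sum_univ_two, Matrix.add_apply,
        Matrix.smul_apply, Matrix.one_apply, smul_eq_mul]
      norm_num
      rw [hAdet, h11]; ring
    rw [htr]
    rw [show (1 + c ^ 2 * A.det)⁻¹ * (2 - 2 * (c ^ 2 * A.det))
        = (2 - 2 * (c ^ 2 * A.det)) / (1 + c ^ 2 * A.det) by ring]
    rw [lt_div_iff₀ hdpos]
    nlinarith [hμsq, sq_nonneg c]
  · -- the subspaces
    obtain ⟨vp, hvp0, hvp⟩ := eigvec A hTr μ hμsq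
    obtain ⟨vm, hvm0, hvm⟩ := eigvec A hTr (-μ) (by rw [neg_pow]; simpa using hμsq)
    -- linear independence
    have hind : LinearIndependent ℝ
        (![WithLp.toLp 2 vp, WithLp.toLp 2 vm] : Fin 2 → EuclideanSpace ℝ (Fin 2)) := by
      rw [linearIndependent_fin2]
      refine ⟨by simpa using hvm0, ?_⟩
      intro a hav
      have hav' : a • vm = vp := congrArg WithLp.ofLp hav
      have h1 : A.mulVec (a • vm) = A.mulVec vp := by rw [hav']
      rw [Matrix.mulVec_smul, hvm, hvp, ← hav'] at h1
      have h2 : (a * -μ) • vm = (μ * a) • vm := by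
        rw [← smul_smul, ← smul_smul]
        exact h1
      have h3 : (a * -μ - μ * a) • vm = 0 := by rw [sub_smul, h2, sub_self]
      have h4 : a * -μ - μ * a = 0 := by
        rcases smul_eq_zero.1 h3 with h | h
        · exact h
        · exact absurd h hvm0
      have ha : a = 0 := by
        have : μ * a = 0 := by linarith [h4]
        rcases mul_eq_zero.1 this with h | h
        · exact absurd h (ne_of_gt hμpos)
        · exact h
      rw [ha, zero_smul] at hav'
      exact hvp0 hav'.symm
    -- eigen for S
    set S : Matrix (Fin 2) (Fin 2) ℝ := (1 - c • A)⁻¹ * (1 + c • A) with hS_def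
    have hinv : ∀ w : Fin 2 → ℝ, (1 - c • A)⁻¹.mulVec ((1 - c • A).mulVec w) = w := by
      intro w
      rw [Matrix.mulVec_mulVec, Matrix.nonsing_inv_mul _ (isUnit_iff_ne_zero.2 hdet0), Matrix.one_mulVec]
    have key : ∀ (v : Fin 2 → ℝ) (r : ℝ), 1 - c * r ≠ 0 → A.mulVec v = r • v →
        S.mulVec v = ((1 + c * r) / (1 - c * r)) • v := by
      intro v r hne hv
      have hminus : (1 - c • A).mulVec v = (1 - c * r) • v := by
        rw [Matrix.sub_mulVec, Matrix.smul_mulVec, Matrix.one_mulVec, hv, smul_smul,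
          sub_smul, one_smul]
      have hplus : (1 + c • A).mulVec v = (1 + c * r) • v := by
        rw [Matrix.add_mulVec, Matrix.smul_mulVec, Matrix.one_mulVec, hv, smul_smul,
          add_smul, one_smul]
      have hv_eq : v = (1 - c * r)⁻¹ • (1 - c • A).mulVec v := by
        rw [hminus, smul_smul, inv_mul_cancel₀ hne, one_smul]
      calc S.mulVec v = (1 - c • A)⁻¹.mulVec ((1 + c • A).mulVec v) := by
            rw [hS_def, ← Matrix.mulVec_mulVec]
        _ = (1 + c * r) • (1 - c • A)⁻¹.mulVec v := by rw [hplus, Matrix.mulVec_smul]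
        _ = (1 + c * r) • (1 - c * r)⁻¹ • (1 - c • A)⁻¹.mulVec ((1 - c • A).mulVec v) := by
            rw [hinv]
            nth_rewrite 1 [hv_eq]
            rw [Matrix.mulVec_smul, hinv]
        _ = ((1 + c * r) / (1 - c * r)) • v := by rw [hinv, smul_smul, div_eq_mul_inv]
    have h1m : (0:ℝ) < 1 - c * μ := by linarith
    have h1p : (0:ℝ) < 1 + c * μ := by linarith
    set σ : ℝ := (1 + c * μ) / (1 - c * μ) with hσ_def
    set σ' : ℝ := (1 - c * μ) / (1 + c * μ) with hσ'_def
    have hSp : S.mulVec vp = σ • vp := key vp μ (ne_of_gt h1m) hvp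
    have hSm : S.mulVec vm = σ' • vm := by
      have := key vm (-μ) (by rw [mul_neg]; linarith) hvm
      rw [this]
      congr 1
      rw [hσ'_def, mul_neg]
      ring_nf
    have hσgt : 1 < σ := by
      rw [hσ_def, lt_div_iff₀ h1m]
      linarith
    have hσ'abs : |σ'| ≤ 1 := by
      rw [hσ'_def, abs_of_pos (div_pos h1m h1p), div_le_one h1p]
      linarith
    -- continuous eigen
    have hEp : ∀ t : ℝ, (NormedSpace.exp (t • A)).mulVec vp = Real.exp (t * μ) • vp := by
      intro t
      apply exp_mulVec_eig
      rw [Matrix.smul_mulVec, hvp, smul_smul]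
    have hEm : ∀ t : ℝ, (NormedSpace.exp (t • A)).mulVec vm = Real.exp (t * -μ) • vm := by
      intro t
      apply exp_mulVec_eig
      rw [Matrix.smul_mulVec, hvm, smul_smul]
    have hvm0' : (WithLp.toLp 2 vm : EuclideanSpace ℝ (Fin 2)) ≠ 0 :=
      fun h => hvm0 (congrArg WithLp.ofLp h)
    refine ⟨Submodule.span ℝ {(WithLp.toLp 2 vm : EuclideanSpace ℝ (Fin 2))},
      Submodule.span ℝ {(WithLp.toLp 2 vm : EuclideanSpace ℝ (Fin 2))}, ?_, finrank_span_singleton hvm0',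
      ?_, rfl⟩
    · -- discrete
      have := bounded_orbit_eq_span (fun n : ℕ => S ^ n) (WithLp.toLp 2 vp) (WithLp.toLp 2 vm) hind
        (fun n => σ ^ n) (fun n => σ' ^ n)
        (fun n => pow_mulVec_eig S σ vp hSp n)
        (fun n => pow_mulVec_eig S σ' vm hSm n)
        (fun n => by rw [abs_pow]; exact pow_le_one₀ (abs_nonneg _) hσ'abs)
        (fun C => pow_unbounded_of_one_lt C hσgt)
      exact this.symm
    · -- continuous
      have horb : ∀ x : EuclideanSpace ℝ (Fin 2), contOrbit A x
          = {y : EuclideanSpace ℝ (Fin 2) |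
              ∃ i : {t : ℝ // 0 ≤ t}, y = (NormedSpace.exp ((i : ℝ) • A)).mulVec x} := by
        intro x
        ext y
        constructor
        · rintro ⟨t, ht, h⟩
          exact ⟨⟨t, ht⟩, h⟩
        · rintro ⟨⟨t, ht⟩, h⟩
          exact ⟨t, ht, h⟩
      have := bounded_orbit_eq_span (fun i : {t : ℝ // 0 ≤ t} => NormedSpace.exp ((i : ℝ) • A))
        (WithLp.toLp 2 vp) (WithLp.toLp 2 vm) hind
        (fun i => Real.exp ((i : ℝ) * μ)) (fun i => Real.exp ((i : ℝ) * -μ))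
        (fun i => hEp i) (fun i => hEm i)
        (fun i => by
          rw [abs_of_pos (Real.exp_pos _)]
          rw [Real.exp_le_one_iff]
          have := i.2
          nlinarith [hμpos])
        (fun C => by
          refine ⟨⟨max 0 (C / μ), le_max_left _ _⟩, ?_⟩
          have h1 : C / μ * μ ≤ max 0 (C / μ) * μ :=
            mul_le_mul_of_nonneg_right (le_max_right _ _) hμpos.le
          rw [div_mul_cancel₀ _ (ne_of_gt hμpos)] at h1
          have h2 := Real.add_one_le_exp (max 0 (C / μ) * μ)
          simp only
          linarith)
      rw [show {x : EuclideanSpace ℝ (Fin 2) | IsBounded (contOrbit A x)}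
          = {x : EuclideanSpace ℝ (Fin 2) |
              IsBounded {y : EuclideanSpace ℝ (Fin 2) |
                ∃ i : {t : ℝ // 0 ≤ t}, y = (NormedSpace.exp ((i : ℝ) • A)).mulVec x}} from
        by ext x; rw [Set.mem_setOf_eq, Set.mem_setOf_eq, horb x]]
      exact this.symm
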